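/- Let K be a field, let R = K[x,y,z,w], and consider the 2×6 matrix β over R with rows (w, z, x^2, 0, x^6, y^6) and (z, x, w^2, w^5, y^6, 0), and the 6×2 matrix α over R with rows (y^6 − x·z·w^4, −x^2·w^4), (x·w^5 − x^3·z·w^2, y^6 − x^4·w^2), (x^4·z + x·z^2·w^2, x^5 + x^2·z·w^2 + w^5), (−x^2, −w^2), (−z, −x), (−w, −z). Then: (i) β·α = 0 as a matrix over R; (ii) for every point p = (x,y,z,w) ∈ K^4 with p ≠ 0, the evaluated matrix β(p) : K^6 → K^2 is surjective (i.e., has rank 2); (iii) for every point p ∈ K^4 with p ≠ 0, the evaluated matrix α(p) : K^2 → K^6 is injective (i.e., has rank 2). -/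

import Mathlib

open MvPolynomial

/-- The matrix `β` of the monad for the spectrum `X_10^10`, with variables
`x = X 0`, `y = X 1`, `z = X 2`, `w = X 3`. -/
noncomputable def betaX10 (K : Type*) [Field K] :
    Matrix (Fin 2) (Fin 6) (MvPolynomial (Fin 4) K) :=
  let x : MvPolynomial (Fin 4) K := X 0
  let y : MvPolynomial (Fin 4) K := X 1
  let z : MvPolynomial (Fin 4) K := X 2
  let w : MvPolynomial (Fin 4) K := X 3
  !![w, z, x ^ 2, 0, x ^ 6, y ^ 6;
     z, x, w ^ 2, w ^ 5, y ^ 6, 0]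

/-- The matrix `α` of the monad for the spectrum `X_10^10`. -/
noncomputable def alphaX10 (K : Type*) [Field K] :
    Matrix (Fin 6) (Fin 2) (MvPolynomial (Fin 4) K) :=
  let x : MvPolynomial (Fin 4) K := X 0
  let y : MvPolynomial (Fin 4) K := X 1
  let z : MvPolynomial (Fin 4) K := X 2
  let w : MvPolynomial (Fin 4) K := X 3
  !![y ^ 6 - x * z * w ^ 4, -(x ^ 2 * w ^ 4);
     x * w ^ 5 - x ^ 3 * z * w ^ 2, y ^ 6 - x ^ 4 * w ^ 2;
     x ^ 4 * z + x * z ^ 2 * w ^ 2, x ^ 5 + x ^ 2 * z * w ^ 2 + w ^ 5;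
     -(x ^ 2), -(w ^ 2);
     -z, -x;
     -w, -z]

/-- If some `2×2` column minor of a `2×6` matrix over a field is nonzero, then the
associated linear map is surjective. -/
lemma surj_of_minor {K : Type*} [Field K] (M : Matrix (Fin 2) (Fin 6) K) (i j : Fin 6)
    (h : M 0 i * M 1 j - M 0 j * M 1 i ≠ 0) :
    Function.Surjective M.mulVecLin := by
  intro t
  refine ⟨Pi.single i ((M 1 j * t 0 - M 0 j * t 1) / (M 0 i * M 1 j - M 0 j * M 1 i))
        + Pi.single j ((M 0 i * t 1 - M 1 i * t 0) / (M 0 i * M 1 j - M 0 j * M 1 i)), ?_⟩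
  rw [Matrix.mulVecLin_apply, Matrix.mulVec_add, Matrix.mulVec_single, Matrix.mulVec_single]
  funext r
  show M r i * _ + M r j * _ = t r
  fin_cases r <;>
    · simp only [MulOpposite.unop_op, Fin.zero_eta, Fin.mk_one]
      rw [mul_div_assoc', mul_div_assoc', ← add_div, div_eq_iff h]
      ring

/-- If some `2×2` row minor of a `6×2` matrix over a field is nonzero, then the
associated linear map is injective. -/
lemma inj_of_minor {K : Type*} [Field K] (A : Matrix (Fin 6) (Fin 2) K) (i j : Fin 6)
    (h : A i 0 * A j 1 - A i 1 * A j 0 ≠ 0) :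
    Function.Injective A.mulVecLin := by
  rw [← LinearMap.ker_eq_bot, LinearMap.ker_eq_bot']
  intro v hv
  have hi : A i 0 * v 0 + A i 1 * v 1 = 0 := by
    simpa [Matrix.mulVecLin_apply, Matrix.mulVec, dotProduct, Fin.sum_univ_two] using
      congrFun hv i
  have hj : A j 0 * v 0 + A j 1 * v 1 = 0 := by
    simpa [Matrix.mulVecLin_apply, Matrix.mulVec, dotProduct, Fin.sum_univ_two] using
      congrFun hv j
  have h0 : (A i 0 * A j 1 - A i 1 * A j 0) * v 0 = 0 := by
    linear_combination A j 1 * hi - A i 1 * hj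
  have h1 : (A i 0 * A j 1 - A i 1 * A j 0) * v 1 = 0 := by
    linear_combination A i 0 * hj - A j 0 * hi
  funext k
  fin_cases k
  · exact (mul_eq_zero.mp h0).resolve_left h
  · exact (mul_eq_zero.mp h1).resolve_left h

set_option maxHeartbeats 1600000 in
/-- `β ∘ α = 0`, `β` is pointwise surjective and `α` is pointwise injective away from the
origin: these data define the positive minimal Horrocks monad with `b = (2,2,1)`,
`a = (3,3)`. -/
theorem stmt_19 (K : Type*) [Field K] :
    betaX10 K * alphaX10 K = 0 ∧
    (∀ p : Fin 4 → K, p ≠ 0 →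
      Function.Surjective (Matrix.mulVecLin ((betaX10 K).map (MvPolynomial.eval p)))) ∧
    (∀ p : Fin 4 → K, p ≠ 0 →
      Function.Injective (Matrix.mulVecLin ((alphaX10 K).map (MvPolynomial.eval p)))) := by
  refine ⟨?_, ?_, ?_⟩
  · apply Matrix.ext
    intro i j
    fin_cases i <;> fin_cases j <;>
      · simp [betaX10, alphaX10, Matrix.mul_apply, Fin.sum_univ_six,
          show (5 : Fin 6) = Fin.succ 4 from rfl, Matrix.cons_val_succ]
        ring
  · intro p hp
    have hall : ¬ (p 0 = 0 ∧ p 1 = 0 ∧ p 2 = 0 ∧ p 3 = 0) := by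
      rintro ⟨h0, h1, h2, h3⟩
      exact hp (funext fun k => by fin_cases k <;> assumption)
    have hβ : (betaX10 K).map (MvPolynomial.eval p) =
        !![p 3, p 2, p 0 ^ 2, 0, p 0 ^ 6, p 1 ^ 6;
           p 2, p 0, p 3 ^ 2, p 3 ^ 5, p 1 ^ 6, 0] := by
      apply Matrix.ext
      intro i j
      fin_cases i <;> fin_cases j <;>
        simp [betaX10, Matrix.map_apply, show (5 : Fin 6) = Fin.succ 4 from rfl,
          Matrix.cons_val_succ]
    rw [hβ]
    by_cases hw : p 3 = 0
    · by_cases hz : p 2 = 0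
      · by_cases hx : p 0 = 0
        · have hy : p 1 ≠ 0 := fun hy => hall ⟨hx, hy, hz, hw⟩
          refine surj_of_minor _ 4 5 ?_
          show p 0 ^ 6 * 0 - p 1 ^ 6 * p 1 ^ 6 ≠ 0
          intro h
          exact hy (pow_eq_zero_iff (n := 12) (by norm_num) |>.mp (by linear_combination -h))
        · refine surj_of_minor _ 1 2 ?_
          show p 2 * p 3 ^ 2 - p 0 ^ 2 * p 0 ≠ 0
          intro h
          exact hx (pow_eq_zero_iff three_ne_zero |>.mp
            (show p 0 ^ 3 = 0 by linear_combination -h + p 3 ^ 2 * hz))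
      · refine surj_of_minor _ 0 1 ?_
        show p 3 * p 0 - p 2 * p 2 ≠ 0
        intro h
        exact hz (pow_eq_zero_iff two_ne_zero |>.mp
          (show p 2 ^ 2 = 0 by linear_combination -h + p 0 * hw))
    · refine surj_of_minor _ 0 3 ?_
      show p 3 * p 3 ^ 5 - 0 * p 2 ≠ 0
      intro h
      exact hw (pow_eq_zero_iff (n := 6) (by norm_num) |>.mp (by linear_combination h))
  · intro p hp
    have hall : ¬ (p 0 = 0 ∧ p 1 = 0 ∧ p 2 = 0 ∧ p 3 = 0) := by
      rintro ⟨h0, h1, h2, h3⟩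
      exact hp (funext fun k => by fin_cases k <;> assumption)
    have hα : (alphaX10 K).map (MvPolynomial.eval p) =
        !![p 1 ^ 6 - p 0 * p 2 * p 3 ^ 4, -(p 0 ^ 2 * p 3 ^ 4);
           p 0 * p 3 ^ 5 - p 0 ^ 3 * p 2 * p 3 ^ 2, p 1 ^ 6 - p 0 ^ 4 * p 3 ^ 2;
           p 0 ^ 4 * p 2 + p 0 * p 2 ^ 2 * p 3 ^ 2, p 0 ^ 5 + p 0 ^ 2 * p 2 * p 3 ^ 2 + p 3 ^ 5;
           -(p 0 ^ 2), -(p 3 ^ 2);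
           -(p 2), -(p 0);
           -(p 3), -(p 2)] := by
      apply Matrix.ext
      intro i j
      fin_cases i <;> fin_cases j <;>
        simp [alphaX10, Matrix.map_apply, show (5 : Fin 6) = Fin.succ 4 from rfl,
          Matrix.cons_val_succ]
    rw [hα]
    by_cases hw : p 3 = 0
    · by_cases hy : p 1 = 0
      · by_cases hx : p 0 = 0
        · have hz : p 2 ≠ 0 := fun hz => hall ⟨hx, hy, hz, hw⟩
          refine inj_of_minor _ 4 5 ?_
          show -(p 2) * -(p 2) - -(p 0) * -(p 3) ≠ 0
          intro h
          exact hz (pow_eq_zero_iff two_ne_zero |>.mp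
            (show p 2 ^ 2 = 0 by linear_combination h + p 0 * hw))
        · refine inj_of_minor _ 3 4 ?_
          show -(p 0 ^ 2) * -(p 0) - -(p 3 ^ 2) * -(p 2) ≠ 0
          intro h
          exact hx (pow_eq_zero_iff three_ne_zero |>.mp
            (show p 0 ^ 3 = 0 by linear_combination h + p 2 * p 3 * hw))
      · refine inj_of_minor _ 0 1 ?_
        show (p 1 ^ 6 - p 0 * p 2 * p 3 ^ 4) * (p 1 ^ 6 - p 0 ^ 4 * p 3 ^ 2)
          - -(p 0 ^ 2 * p 3 ^ 4) * (p 0 * p 3 ^ 5 - p 0 ^ 3 * p 2 * p 3 ^ 2) ≠ 0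
        intro h
        refine hy (pow_eq_zero_iff (n := 12) (by norm_num) |>.mp ?_)
        linear_combination h + (p 1 ^ 6 * p 0 ^ 4 * p 3 + p 0 * p 2 * p 3 ^ 3 * p 1 ^ 6
          - p 0 ^ 3 * p 3 ^ 8) * hw
    · by_cases hm : p 2 ^ 2 - p 0 * p 3 = 0
      · refine inj_of_minor _ 2 5 ?_
        show (p 0 ^ 4 * p 2 + p 0 * p 2 ^ 2 * p 3 ^ 2) * -(p 2)
          - (p 0 ^ 5 + p 0 ^ 2 * p 2 * p 3 ^ 2 + p 3 ^ 5) * -(p 3) ≠ 0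
        intro h
        refine hw (pow_eq_zero_iff (n := 6) (by norm_num) |>.mp ?_)
        linear_combination h + (p 0 ^ 4 + p 0 * p 2 * p 3 ^ 2) * hm
      · refine inj_of_minor _ 4 5 ?_
        show -(p 2) * -(p 2) - -(p 0) * -(p 3) ≠ 0
        intro h
        exact hm (by linear_combination h)
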